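/- (Role model theorem, inequality) If X, Y and Z form a Markov chain X–Y–Z, then the expected divergence satisfies E D(P_{X|Y}‖Q_{X|Z}) = Σ_{y,z} P_{YZ}(y,z) D(P_{X|Y=y}‖Q(·|z)) ≥ H(X|Z) − H(X|Y). -/

import Mathlib

open Finset Real

theorem stmt5 {𝒳 𝒴 𝒵 : Type*} [Fintype 𝒳] [Fintype 𝒴] [Fintype 𝒵]
    [Nonempty 𝒳] [Nonempty 𝒴] [Nonempty 𝒵]
    (P : 𝒳 → 𝒴 → 𝒵 → ℝ)
    (hPnn : ∀ x y z, 0 ≤ P x y z)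
    (hPsum : ∑ x, ∑ y, ∑ z, P x y z = 1)
    (PX : 𝒳 → ℝ) (hPX : ∀ x, PX x = ∑ y, ∑ z, P x y z)
    (PY : 𝒴 → ℝ) (hPY : ∀ y, PY y = ∑ x, ∑ z, P x y z)
    (PZ : 𝒵 → ℝ) (hPZ : ∀ z, PZ z = ∑ x, ∑ y, P x y z)
    (PXY : 𝒳 → 𝒴 → ℝ) (hPXY : ∀ x y, PXY x y = ∑ z, P x y z)
    (PXZ : 𝒳 → 𝒵 → ℝ) (hPXZ : ∀ x z, PXZ x z = ∑ y, P x y z)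
    (PYZ : 𝒴 → 𝒵 → ℝ) (hPYZ : ∀ y z, PYZ y z = ∑ x, P x y z)
    (hMarkov : ∀ x y z, P x y z * PY y = PXY x y * PYZ y z)
    (PXgY : 𝒳 → 𝒴 → ℝ) (hPXgY : ∀ x y, 0 < PY y → PXgY x y = PXY x y / PY y)
    (PXgZ : 𝒳 → 𝒵 → ℝ) (hPXgZ : ∀ x z, 0 < PZ z → PXgZ x z = PXZ x z / PZ z)
    (Q : 𝒵 → 𝒳 → ℝ)
    (hQnn : ∀ z x, 0 ≤ Q z x)
    (hQsum : ∀ z, ∑ x, Q z x = 1)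
    (hQpos : ∀ x z, 0 < PXZ x z → 0 < Q z x)
    : (∑ y, ∑ z, PYZ y z * (∑ x, PXgY x y * logb 2 (PXgY x y / Q z x))) ≥ (-∑ x, ∑ z, PXZ x z * logb 2 (PXgZ x z)) - (-∑ x, ∑ y, PXY x y * logb 2 (PXgY x y)) := by
  have hl2 : (0:ℝ) < Real.log 2 := Real.log_pos one_lt_two
  have hPXYnn : ∀ x y, 0 ≤ PXY x y := fun x y => (hPXY x y) ▸ Finset.sum_nonneg fun z _ => hPnn x y z
  have hPXZnn : ∀ x z, 0 ≤ PXZ x z := fun x z => (hPXZ x z) ▸ Finset.sum_nonneg fun y _ => hPnn x y z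
  have hPYZnn : ∀ y z, 0 ≤ PYZ y z := fun y z => (hPYZ y z) ▸ Finset.sum_nonneg fun x _ => hPnn x y z
  have hPYnn : ∀ y, 0 ≤ PY y :=
    fun y => (hPY y) ▸ Finset.sum_nonneg fun x _ => Finset.sum_nonneg fun z _ => hPnn x y z
  have hPZ_eq : ∀ z, PZ z = ∑ x, PXZ x z := fun z => by
    rw [hPZ]; exact Finset.sum_congr rfl fun x _ => (hPXZ x z).symm
  have hPXZ_le : ∀ x z, PXZ x z ≤ PZ z := fun x z => by
    rw [hPZ_eq]; exact Finset.single_le_sum (fun x' _ => hPXZnn x' z) (Finset.mem_univ x)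
  have hP_le_PXZ : ∀ x y z, P x y z ≤ PXZ x z := fun x y z => by
    rw [hPXZ]; exact Finset.single_le_sum (fun y' _ => hPnn x y' z) (Finset.mem_univ y)
  -- key identity: PYZ y z * PXgY x y = P x y z
  have hkey : ∀ x y z, PYZ y z * PXgY x y = P x y z := by
    intro x y z
    rcases eq_or_lt_of_le (hPYnn y) with h0 | hpos
    · have hs : ∑ x', ∑ z', P x' y z' = 0 := by rw [← hPY y, ← h0]
      have hP0 : ∀ x' z', P x' y z' = 0 := by
        intro x' z'
        have h1 := (Finset.sum_eq_zero_iff_of_nonneg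
          (fun x' _ => Finset.sum_nonneg fun z' _ => hPnn x' y z')).mp hs x' (Finset.mem_univ x')
        exact (Finset.sum_eq_zero_iff_of_nonneg (fun z' _ => hPnn x' y z')).mp h1 z' (Finset.mem_univ z')
      have hz : PYZ y z = 0 := by rw [hPYZ]; exact Finset.sum_eq_zero fun x' _ => hP0 x' z
      rw [hz, zero_mul, hP0]
    · rw [hPXgY x y hpos, mul_div_assoc', div_eq_iff hpos.ne', hMarkov x y z]; ring
  have hPXgY_pos : ∀ x y z, 0 < P x y z → 0 < PXgY x y := by
    intro x y z hp
    have hk := hkey x y z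
    nlinarith [hPYZnn y z]
  have hQpos' : ∀ x y z, 0 < P x y z → 0 < Q z x :=
    fun x y z hp => hQpos x z (lt_of_lt_of_le hp (hP_le_PXZ x y z))
  -- per-term log split
  have hsplit : ∀ x y z, P x y z * logb 2 (PXgY x y / Q z x)
      = P x y z * logb 2 (PXgY x y) - P x y z * logb 2 (Q z x) := by
    intro x y z
    rcases eq_or_lt_of_le (hPnn x y z) with h0 | hp
    · rw [← h0]; ring
    · rw [Real.logb_div (hPXgY_pos x y z hp).ne' (hQpos' x y z hp).ne', mul_sub]
  -- LHS rewrite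
  have hLHS : (∑ y, ∑ z, PYZ y z * (∑ x, PXgY x y * logb 2 (PXgY x y / Q z x)))
      = (∑ x, ∑ y, PXY x y * logb 2 (PXgY x y)) - (∑ x, ∑ z, PXZ x z * logb 2 (Q z x)) := by
    have h1 : ∀ y z, PYZ y z * (∑ x, PXgY x y * logb 2 (PXgY x y / Q z x))
        = ∑ x, (P x y z * logb 2 (PXgY x y) - P x y z * logb 2 (Q z x)) := by
      intro y z
      rw [Finset.mul_sum]
      refine Finset.sum_congr rfl fun x _ => ?_
      rw [← mul_assoc, hkey, hsplit]
    simp_rw [h1, Finset.sum_sub_distrib]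
    congr 1
    · calc ∑ y, ∑ z, ∑ x, P x y z * logb 2 (PXgY x y)
          = ∑ y, ∑ x, ∑ z, P x y z * logb 2 (PXgY x y) :=
            Finset.sum_congr rfl fun y _ => Finset.sum_comm
        _ = ∑ x, ∑ y, ∑ z, P x y z * logb 2 (PXgY x y) := Finset.sum_comm
        _ = ∑ x, ∑ y, PXY x y * logb 2 (PXgY x y) :=
            Finset.sum_congr rfl fun x _ => Finset.sum_congr rfl fun y _ => by
              rw [hPXY, Finset.sum_mul]
    · calc ∑ y, ∑ z, ∑ x, P x y z * logb 2 (Q z x)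
          = ∑ y, ∑ x, ∑ z, P x y z * logb 2 (Q z x) :=
            Finset.sum_congr rfl fun y _ => Finset.sum_comm
        _ = ∑ x, ∑ y, ∑ z, P x y z * logb 2 (Q z x) := Finset.sum_comm
        _ = ∑ x, ∑ z, ∑ y, P x y z * logb 2 (Q z x) :=
            Finset.sum_congr rfl fun x _ => Finset.sum_comm
        _ = ∑ x, ∑ z, PXZ x z * logb 2 (Q z x) :=
            Finset.sum_congr rfl fun x _ => Finset.sum_congr rfl fun z _ => by
              rw [hPXZ, Finset.sum_mul]
  -- Gibbs inequality part
  have hterm : ∀ x z, (PXZ x z - PZ z * Q z x) / Real.log 2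
      ≤ PXZ x z * logb 2 (PXgZ x z) - PXZ x z * logb 2 (Q z x) := by
    intro x z
    rcases eq_or_lt_of_le (hPXZnn x z) with h0 | hp
    · rw [← h0]
      simp only [zero_sub, zero_mul, sub_zero, sub_self]
      have hnn : 0 ≤ PZ z * Q z x := mul_nonneg ((hPZ_eq z) ▸ Finset.sum_nonneg fun x' _ => hPXZnn x' z) (hQnn z x)
      have : -(PZ z * Q z x) / Real.log 2 ≤ 0 := div_nonpos_of_nonpos_of_nonneg (by linarith) hl2.le
      linarith [this]
    · have hPZpos : 0 < PZ z := lt_of_lt_of_le hp (hPXZ_le x z)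
      have hq : 0 < Q z x := hQpos x z hp
      have hpg : PXgZ x z = PXZ x z / PZ z := hPXgZ x z hPZpos
      have htpos : (0:ℝ) < PZ z * Q z x / PXZ x z := div_pos (mul_pos hPZpos hq) hp
      have hlog := Real.log_le_sub_one_of_pos htpos
      have h1 : Real.logb 2 (PXgZ x z) - Real.logb 2 (Q z x)
          = -Real.log (PZ z * Q z x / PXZ x z) / Real.log 2 := by
        rw [hpg, Real.logb, Real.logb,
          Real.log_div (mul_pos hPZpos hq).ne' hp.ne',
          Real.log_div hp.ne' hPZpos.ne',
          Real.log_mul hPZpos.ne' hq.ne']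
        ring
      rw [← mul_sub, h1]
      have ht : PZ z * Q z x / PXZ x z * PXZ x z = PZ z * Q z x := by
        field_simp
      have hm := mul_le_mul_of_nonneg_left hlog hp.le
      have hfin : PXZ x z - PZ z * Q z x
          ≤ PXZ x z * -Real.log (PZ z * Q z x / PXZ x z) := by nlinarith [hm, ht]
      have h2 : PXZ x z * (-Real.log (PZ z * Q z x / PXZ x z) / Real.log 2)
          = (PXZ x z * -Real.log (PZ z * Q z x / PXZ x z)) / Real.log 2 := by ring
      rw [h2]
      exact (div_le_div_iff_of_pos_right hl2).mpr hfin
  have hzero : ∑ x, ∑ z, (PXZ x z - PZ z * Q z x) / Real.log 2 = 0 := by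
    have hz : ∀ z, ∑ x, (PXZ x z - PZ z * Q z x) = 0 := by
      intro z
      rw [Finset.sum_sub_distrib, ← Finset.mul_sum, hQsum, mul_one, ← hPZ_eq, sub_self]
    rw [Finset.sum_comm]
    rw [Finset.sum_eq_zero]
    intro z _
    rw [← Finset.sum_div, hz, zero_div]
  have hGibbs : 0 ≤ ∑ x, ∑ z, (PXZ x z * logb 2 (PXgZ x z) - PXZ x z * logb 2 (Q z x)) := by
    calc (0:ℝ) = ∑ x, ∑ z, (PXZ x z - PZ z * Q z x) / Real.log 2 := hzero.symm
      _ ≤ _ := Finset.sum_le_sum fun x _ => Finset.sum_le_sum fun z _ => hterm x z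
  rw [hLHS]
  have hsd : ∑ x, ∑ z, (PXZ x z * logb 2 (PXgZ x z) - PXZ x z * logb 2 (Q z x))
      = (∑ x, ∑ z, PXZ x z * logb 2 (PXgZ x z)) - (∑ x, ∑ z, PXZ x z * logb 2 (Q z x)) := by
    rw [← Finset.sum_sub_distrib]
    exact Finset.sum_congr rfl fun x _ => Finset.sum_sub_distrib _ _
  rw [hsd] at hGibbs
  linarith
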